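/- Let A = U - V be a proper weak regular splitting of type II of a semimonotone matrix A ∈ ℝ^{m×n}, and suppose ρ(U†V) > 0. Then there exists a vector x ≥ 0, x ≠ 0, such that U†Vx = ρ(U†V)x, Ax ≥ 0 with Ax ≠ 0, and Vx ≥ 0 with Vx ≠ 0. -/

import Mathlib

open Matrix Polynomial

/-- `X` is the Moore-Penrose inverse of `A`. -/
def IsMP {m n : ℕ} (A : Matrix (Fin m) (Fin n) ℝ) (X : Matrix (Fin n) (Fin m) ℝ) : Prop :=
  A * X * A = A ∧ X * A * X = X ∧ (A * X)ᵀ = A * X ∧ (X * A)ᵀ = X * A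

/-- `A = U - V` is a proper splitting: `R(U)=R(A)` and `N(U)=N(A)`. -/
def ProperSplitting {m n : ℕ} (A U V : Matrix (Fin m) (Fin n) ℝ) : Prop :=
  A = U - V ∧ LinearMap.range U.mulVecLin = LinearMap.range A.mulVecLin ∧
    LinearMap.ker U.mulVecLin = LinearMap.ker A.mulVecLin

/-- `μ : ℂ` is an eigenvalue of the real matrix `M`. -/
def IsEigen {n : ℕ} (M : Matrix (Fin n) (Fin n) ℝ) (μ : ℂ) : Prop :=
  ((M.map (algebraMap ℝ ℂ)).charpoly).IsRoot μ

/-- The spectral radius of a real square matrix. -/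
noncomputable def specRad {n : ℕ} (M : Matrix (Fin n) (Fin n) ℝ) : ℝ :=
  sSup {r : ℝ | ∃ μ : ℂ, IsEigen M μ ∧ r = ‖μ‖}

/-- Entrywise nonnegativity. -/
def EntryNonneg {m n : ℕ} (A : Matrix (Fin m) (Fin n) ℝ) : Prop := ∀ i j, 0 ≤ A i j

/-- Entrywise order. -/
def EntryLE {m n : ℕ} (A B : Matrix (Fin m) (Fin n) ℝ) : Prop := ∀ i j, A i j ≤ B i j

/-- Entrywise strict order. -/
def EntryLT {m n : ℕ} (A B : Matrix (Fin m) (Fin n) ℝ) : Prop := ∀ i j, A i j < B i j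

set_option maxHeartbeats 1600000

section aux
open Finset Filter

lemma eval_charpoly' {k : ℕ} {F : Type*} [Field F] (M : Matrix (Fin k) (Fin k) F) (t : F) :
    (M.charpoly).eval t = (t • (1 : Matrix (Fin k) (Fin k) F) - M).det := by
  rw [Matrix.charpoly, ← Polynomial.coe_evalRingHom, RingHom.map_det]
  congr 1
  ext i j
  by_cases h : i = j
  · subst h
    simp [charmatrix_apply_eq, Matrix.one_apply, Matrix.sub_apply]
  · simp [charmatrix_apply_ne _ _ _ h, Matrix.one_apply_ne h, Matrix.sub_apply]

lemma isEigen_iff {k : ℕ} (M : Matrix (Fin k) (Fin k) ℝ) (μ : ℂ) :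
    IsEigen M μ ↔ ∃ z : Fin k → ℂ, z ≠ 0 ∧ (M.map (algebraMap ℝ ℂ)).mulVec z = μ • z := by
  rw [IsEigen, Polynomial.IsRoot, eval_charpoly']
  rw [← Matrix.exists_mulVec_eq_zero_iff]
  constructor
  · rintro ⟨v, hv, h⟩
    refine ⟨v, hv, ?_⟩
    have := h
    rw [Matrix.sub_mulVec, Matrix.smul_mulVec, Matrix.one_mulVec, sub_eq_zero] at this
    rw [← this]
  · rintro ⟨z, hz, h⟩
    refine ⟨z, hz, ?_⟩
    rw [Matrix.sub_mulVec, Matrix.smul_mulVec, Matrix.one_mulVec, h, sub_self]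

lemma isEigen_transfer {a b : ℕ} (X : Matrix (Fin a) (Fin b) ℝ) (Y : Matrix (Fin b) (Fin a) ℝ)
    {μ : ℂ} (hμ : μ ≠ 0) (h : IsEigen (X * Y) μ) : IsEigen (Y * X) μ := by
  rw [isEigen_iff] at h ⊢
  obtain ⟨z, hz, hzeq⟩ := h
  set f := algebraMap ℝ ℂ with hf
  have hmap : (X * Y).map f = X.map f * Y.map f := Matrix.map_mul
  have hmap2 : (Y * X).map f = Y.map f * X.map f := Matrix.map_mul
  have key : (X.map f).mulVec ((Y.map f).mulVec z) = μ • z := by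
    rw [Matrix.mulVec_mulVec, ← hmap, hzeq]
  refine ⟨(Y.map f).mulVec z, ?_, ?_⟩
  · intro h0
    apply hz
    rw [h0, Matrix.mulVec_zero] at key
    have := key.symm
    rw [smul_eq_zero] at this
    exact this.resolve_left hμ
  · rw [hmap2, ← Matrix.mulVec_mulVec, key, Matrix.mulVec_smul]

lemma dom_mul {A B : Matrix (Fin k) (Fin k) ℂ} {P Q : Matrix (Fin k) (Fin k) ℝ}
    (hA : ∀ i j, ‖A i j‖ ≤ P i j) (hB : ∀ i j, ‖B i j‖ ≤ Q i j) :
    ∀ i j, ‖(A * B) i j‖ ≤ (P * Q) i j := by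
  intro i j
  rw [Matrix.mul_apply, Matrix.mul_apply]
  refine le_trans (norm_sum_le _ _) (Finset.sum_le_sum fun l _ => ?_)
  rw [norm_mul]
  exact mul_le_mul (hA i l) (hB l j) (norm_nonneg _) (le_trans (norm_nonneg _) (hA i l))

lemma dom_pow {A : Matrix (Fin k) (Fin k) ℂ} {P : Matrix (Fin k) (Fin k) ℝ}
    (hA : ∀ i j, ‖A i j‖ ≤ P i j) : ∀ p, ∀ i j, ‖(A ^ p) i j‖ ≤ (P ^ p) i j := by
  intro p
  induction p with
  | zero =>
    intro i j
    rw [pow_zero, pow_zero]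
    rcases eq_or_ne i j with h | h <;> simp [Matrix.one_apply, h]
  | succ p ih => rw [pow_succ, pow_succ]; exact dom_mul ih hA

lemma bnd_mul_left {𝕜 : Type*} [RCLike 𝕜] {A M : Matrix (Fin k) (Fin k) 𝕜} {a b : ℝ}
    (hA : ∀ i j, ‖A i j‖ ≤ a) (hM : ∀ i j, ‖M i j‖ ≤ b) (hb : 0 ≤ b) :
    ∀ i j, ‖(A * M) i j‖ ≤ k * a * b := by
  intro i j
  rw [Matrix.mul_apply]
  refine le_trans (norm_sum_le _ _) ?_
  have : ∀ l ∈ Finset.univ (α := Fin k), ‖A i l * M l j‖ ≤ a * b := fun l _ => by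
    rw [norm_mul]
    exact mul_le_mul (hA i l) (hM l j) (norm_nonneg _) (le_trans (norm_nonneg _) (hA i l))
  refine le_trans (Finset.sum_le_sum this) ?_
  rw [Finset.sum_const, Finset.card_univ, Fintype.card_fin, nsmul_eq_mul, mul_assoc]

lemma bnd_pow_mul {𝕜 : Type*} [RCLike 𝕜] {A M : Matrix (Fin k) (Fin k) 𝕜} {a b : ℝ}
    (hA : ∀ i j, ‖A i j‖ ≤ a) (hM : ∀ i j, ‖M i j‖ ≤ b) (ha : 0 ≤ a) (hb : 0 ≤ b) :
    ∀ K, ∀ i j, ‖(A ^ K * M) i j‖ ≤ (k * a) ^ K * b := by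
  intro K
  induction K with
  | zero =>
    intro i j
    rw [pow_zero, one_mul, pow_zero, one_mul]
    exact hM i j
  | succ K ih =>
    intro i j
    have h1 : A ^ (K + 1) * M = A * (A ^ K * M) := by rw [pow_succ']; rw [mul_assoc]
    rw [h1]
    have := bnd_mul_left (k := k) hA ih (by positivity) i j
    calc ‖(A * (A ^ K * M)) i j‖ ≤ k * a * ((k * a) ^ K * b) := this
      _ = (k * a) ^ (K + 1) * b := by ring

lemma exists_entry_bound {𝕜 : Type*} [RCLike 𝕜] (M : Matrix (Fin k) (Fin k) 𝕜) :
    ∃ b : ℝ, 0 ≤ b ∧ ∀ i j, ‖M i j‖ ≤ b := by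
  refine ⟨∑ i, ∑ j, ‖M i j‖, Finset.sum_nonneg fun i _ => Finset.sum_nonneg fun j _ =>
    norm_nonneg _, fun i j => ?_⟩
  calc ‖M i j‖ ≤ ∑ j', ‖M i j'‖ :=
        Finset.single_le_sum (fun j' _ => norm_nonneg (M i j')) (Finset.mem_univ j)
    _ ≤ ∑ i', ∑ j', ‖M i' j'‖ :=
        Finset.single_le_sum (f := fun i' => ∑ j', ‖M i' j'‖)
          (fun i' _ => Finset.sum_nonneg fun j' _ => norm_nonneg _) (Finset.mem_univ i)

lemma conv_dominate {Rs : Matrix (Fin k) (Fin k) ℝ} {Rcs : Matrix (Fin k) (Fin k) ℂ}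
    {S : ℕ → Matrix (Fin k) (Fin k) ℝ} {Sc : ℕ → Matrix (Fin k) (Fin k) ℂ}
    {q bs bcs : ℝ} (hq0 : 0 ≤ q) (hq1 : q < 1)
    (h1 : ∀ K i j, |Rs i j - S K i j| ≤ q ^ K * bs)
    (h2 : ∀ K i j, ‖Rcs i j - Sc K i j‖ ≤ q ^ K * bcs)
    (h4 : ∀ K i j, ‖Sc K i j‖ ≤ S K i j) :
    ∀ i j, ‖Rcs i j‖ ≤ Rs i j := by
  intro i j
  have hq : Tendsto (fun K : ℕ => q ^ K) atTop (nhds 0) :=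
    tendsto_pow_atTop_nhds_zero_of_lt_one hq0 hq1
  have hlimS : Tendsto (fun K => S K i j) atTop (nhds (Rs i j)) := by
    rw [tendsto_iff_norm_sub_tendsto_zero]
    refine squeeze_zero_norm (fun K => ?_) (by simpa using hq.mul_const bs)
    rw [norm_norm, Real.norm_eq_abs, abs_sub_comm]
    exact h1 K i j
  have hlimSc : Tendsto (fun K => Sc K i j) atTop (nhds (Rcs i j)) := by
    rw [tendsto_iff_norm_sub_tendsto_zero]
    refine squeeze_zero_norm (fun K => ?_) (by simpa using hq.mul_const bcs)
    rw [norm_norm, ← norm_neg, neg_sub]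
    exact h2 K i j
  exact le_of_tendsto_of_tendsto' hlimSc.norm hlimS fun K => h4 K i j

lemma resolvent_id {F : Type*} [Field F] (C : Matrix (Fin k) (Fin k) F) (s τ : F)
    (hs : IsUnit (s • (1:Matrix (Fin k) (Fin k) F) - C).det)
    (hτ : IsUnit (τ • (1:Matrix (Fin k) (Fin k) F) - C).det) :
    (s • (1:Matrix (Fin k) (Fin k) F) - C)⁻¹ =
      (τ • (1:Matrix (Fin k) (Fin k) F) - C)⁻¹ +
        (τ - s) • ((τ • (1:Matrix (Fin k) (Fin k) F) - C)⁻¹ *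
          (s • (1:Matrix (Fin k) (Fin k) F) - C)⁻¹) := by
  set Rs := (s • (1:Matrix (Fin k) (Fin k) F) - C)⁻¹ with hRs
  set Rτ := (τ • (1:Matrix (Fin k) (Fin k) F) - C)⁻¹ with hRτ
  have h1 : (s • (1:Matrix (Fin k) (Fin k) F) - C) * Rs = 1 := Matrix.mul_nonsing_inv _ hs
  have h2 : Rτ * (τ • (1:Matrix (Fin k) (Fin k) F) - C) = 1 := Matrix.nonsing_inv_mul _ hτ
  have key : Rτ * ((s • (1:Matrix (Fin k) (Fin k) F) - C) * Rs) = Rτ := by rw [h1, mul_one]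
  have hexp : (s • (1:Matrix (Fin k) (Fin k) F) - C) =
      (τ • (1:Matrix (Fin k) (Fin k) F) - C) - (τ - s) • (1 : Matrix (Fin k) (Fin k) F) := by
    rw [sub_smul]; abel
  rw [hexp, ← mul_assoc, Matrix.mul_sub, h2, Matrix.mul_smul, mul_one, sub_mul, one_mul,
    Matrix.smul_mul] at key
  exact sub_eq_iff_eq_add.mp key

lemma expand_geom {F : Type*} [Field F] (a r : Matrix (Fin k) (Fin k) F) (d : F)
    (h : r = a + d • (a * r)) (K : ℕ) :
    r = (∑ j ∈ Finset.range K, d ^ j • a ^ (j + 1)) + d ^ K • (a ^ K * r) := by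
  induction K with
  | zero => simp
  | succ K ih =>
    have step : d ^ K • (a ^ K * r) = d ^ K • a ^ (K + 1) + d ^ (K + 1) • (a ^ (K + 1) * r) := by
      nth_rewrite 1 [h]
      rw [Matrix.mul_add, Matrix.mul_smul, smul_add, smul_smul, ← mul_assoc,
        show a ^ K * a = a ^ (K + 1) from (pow_succ a K).symm,
        show d ^ K * d = d ^ (K + 1) from (pow_succ d K).symm]
    rw [Finset.sum_range_succ]
    conv_lhs => rw [ih]
    rw [step]
    abel

lemma expand_base {F : Type*} [Field F] (a r : Matrix (Fin k) (Fin k) F) (c : F)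
    (h : r = c • 1 + c • (a * r)) (K : ℕ) :
    r = (∑ j ∈ Finset.range K, c ^ (j + 1) • a ^ j) + c ^ K • (a ^ K * r) := by
  induction K with
  | zero => simp
  | succ K ih =>
    have step : c ^ K • (a ^ K * r) = c ^ (K + 1) • a ^ K + c ^ (K + 1) • (a ^ (K + 1) * r) := by
      nth_rewrite 1 [h]
      rw [Matrix.mul_add, Matrix.mul_smul, smul_add, smul_smul, Matrix.mul_one, Matrix.mul_smul,
        smul_smul, ← mul_assoc,
        show a ^ K * a = a ^ (K + 1) from (pow_succ a K).symm,
        show c ^ K * c = c ^ (K + 1) from (pow_succ c K).symm]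
    rw [Finset.sum_range_succ]
    conv_lhs => rw [ih]
    rw [step]
    abel

lemma map_smul_one_sub (C : Matrix (Fin k) (Fin k) ℝ) (t : ℝ) :
    (t • (1 : Matrix (Fin k) (Fin k) ℝ) - C).map (algebraMap ℝ ℂ) =
      (t : ℂ) • (1 : Matrix (Fin k) (Fin k) ℂ) - C.map (algebraMap ℝ ℂ) := by
  ext i j
  rcases eq_or_ne i j with h | h <;>
    simp [Matrix.map_apply, Matrix.sub_apply, Matrix.smul_apply, Matrix.one_apply, h]

-- determinant of mapped matrix

lemma det_map_eq (M : Matrix (Fin k) (Fin k) ℝ) :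
    (M.map (algebraMap ℝ ℂ)).det = ((M.det : ℝ) : ℂ) :=
  (RingHom.map_det (algebraMap ℝ ℂ) M).symm

lemma det_unit_real {k : ℕ} {C : Matrix (Fin k) (Fin k) ℝ} {ρ : ℝ} (hub : ∀ μ : ℂ, IsEigen C μ → ‖μ‖ ≤ ρ) {t : ℝ} (ht : ρ < t) :
    IsUnit (t • (1 : Matrix (Fin k) (Fin k) ℝ) - C).det := by
  rw [isUnit_iff_ne_zero]
  intro h0
  have hdet : ((t : ℂ) • (1 : Matrix (Fin k) (Fin k) ℂ) - C.map (algebraMap ℝ ℂ)).det = 0 := by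
    rw [← map_smul_one_sub, det_map_eq, h0, Complex.ofReal_zero]
  have heig : IsEigen C (t : ℂ) := by
    show ((C.map (algebraMap ℝ ℂ)).charpoly).IsRoot (t : ℂ)
    rw [Polynomial.IsRoot, eval_charpoly', hdet]
  have := hub _ heig
  rw [Complex.norm_real, Real.norm_eq_abs] at this
  exact absurd (lt_of_lt_of_le ht (le_trans (le_abs_self t) this)) (lt_irrefl ρ)

lemma det_unit_complex {k : ℕ} {C : Matrix (Fin k) (Fin k) ℝ} {ρ : ℝ} (hub : ∀ μ : ℂ, IsEigen C μ → ‖μ‖ ≤ ρ) {w : ℂ}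
    (hw : ρ < ‖w‖) :
    IsUnit ((w • (1 : Matrix (Fin k) (Fin k) ℂ) - C.map (algebraMap ℝ ℂ)).det) := by
  rw [isUnit_iff_ne_zero]
  intro h0
  have heig : IsEigen C w := by
    show ((C.map (algebraMap ℝ ℂ)).charpoly).IsRoot w
    rw [Polynomial.IsRoot, eval_charpoly', h0]
  exact absurd (lt_of_lt_of_le hw (hub _ heig)) (lt_irrefl ρ)

lemma good_step {k : ℕ} {C : Matrix (Fin k) (Fin k) ℝ} {Cc : Matrix (Fin k) (Fin k) ℂ}
    {ρ : ℝ} {ζ : ℝ → ℂ} (hζd : ∀ t s : ℝ, ‖ζ t - ζ s‖ = |t - s|)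
    (hdR : ∀ {t : ℝ}, ρ < t → IsUnit (t • (1:Matrix (Fin k) (Fin k) ℝ) - C).det)
    (hdC : ∀ {t : ℝ}, ρ < t → IsUnit ((ζ t) • (1:Matrix (Fin k) (Fin k) ℂ) - Cc).det)
    {τ s b : ℝ} (hs : ρ < s) (hsτ : s < τ) (hb0 : 0 ≤ b)
    (hGτ : ∀ i j, ‖((ζ τ • (1:Matrix (Fin k) (Fin k) ℂ) - Cc)⁻¹) i j‖ ≤
      ((τ • (1:Matrix (Fin k) (Fin k) ℝ) - C)⁻¹) i j)
    (hbτ : ∀ i j, ((τ • (1:Matrix (Fin k) (Fin k) ℝ) - C)⁻¹) i j ≤ b)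
    (hsmall : (τ - s) * (k * b) < 1) :
    ∀ i j, ‖((ζ s • (1:Matrix (Fin k) (Fin k) ℂ) - Cc)⁻¹) i j‖ ≤
      ((s • (1:Matrix (Fin k) (Fin k) ℝ) - C)⁻¹) i j := by
  have hτ : ρ < τ := hs.trans hsτ
  set Rτ := (τ • (1:Matrix (Fin k) (Fin k) ℝ) - C)⁻¹ with hRτ
  set Rs := (s • (1:Matrix (Fin k) (Fin k) ℝ) - C)⁻¹ with hRs
  set Rcτ := (ζ τ • (1:Matrix (Fin k) (Fin k) ℂ) - Cc)⁻¹ with hRcτ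
  set Rcs := (ζ s • (1:Matrix (Fin k) (Fin k) ℂ) - Cc)⁻¹ with hRcs
  have hd0 : (0:ℝ) < τ - s := by linarith
  have hdcn : ‖ζ τ - ζ s‖ = τ - s := by rw [hζd, abs_of_pos hd0]
  have hidR : Rs = Rτ + (τ - s) • (Rτ * Rs) := resolvent_id C s τ (hdR hs) (hdR hτ)
  have hidC : Rcs = Rcτ + (ζ τ - ζ s) • (Rcτ * Rcs) := by
    have := resolvent_id Cc (ζ s) (ζ τ) (hdC hs) (hdC hτ)
    exact this
  have hexpR := expand_geom Rτ Rs (τ - s) hidR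
  have hexpC := expand_geom Rcτ Rcs (ζ τ - ζ s) hidC
  obtain ⟨bs, hbs0, hbs⟩ := exists_entry_bound (𝕜 := ℝ) Rs
  obtain ⟨bcs, hbcs0, hbcs⟩ := exists_entry_bound (𝕜 := ℂ) Rcs
  have hGτ' : ∀ i j, 0 ≤ Rτ i j := fun i j => le_trans (norm_nonneg _) (hGτ i j)
  have hRτn : ∀ i j, ‖Rτ i j‖ ≤ b := fun i j => by
    rw [Real.norm_eq_abs, abs_of_nonneg (hGτ' i j)]; exact hbτ i j
  have hRcτn : ∀ i j, ‖Rcτ i j‖ ≤ b := fun i j => le_trans (hGτ i j) (hbτ i j)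
  have hq0 : 0 ≤ (τ - s) * (k * b) := by positivity
  refine conv_dominate (q := (τ - s) * (k * b)) (bs := bs) (bcs := bcs)
    (S := fun K => ∑ l ∈ Finset.range K, (τ - s) ^ l • Rτ ^ (l + 1))
    (Sc := fun K => ∑ l ∈ Finset.range K, (ζ τ - ζ s) ^ l • Rcτ ^ (l + 1))
    hq0 hsmall ?_ ?_ ?_
  · -- real remainder bound
    intro K i j
    have he := congrArg (fun M => M i j) (hexpR K)
    simp only [Matrix.add_apply] at he
    have : Rs i j - (∑ l ∈ Finset.range K, (τ-s) ^ l • Rτ ^ (l + 1)) i j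
        = ((τ-s) ^ K • (Rτ ^ K * Rs)) i j := by rw [he]; ring
    rw [this, Matrix.smul_apply, smul_eq_mul, abs_mul, abs_pow, abs_of_pos hd0]
    have h2 := bnd_pow_mul hRτn hbs hb0 hbs0 K i j
    rw [Real.norm_eq_abs] at h2
    calc (τ-s) ^ K * |(Rτ ^ K * Rs) i j| ≤ (τ-s) ^ K * ((k * b) ^ K * bs) := by
          apply mul_le_mul_of_nonneg_left h2 (by positivity)
      _ = ((τ-s) * (k * b)) ^ K * bs := by rw [mul_pow (τ-s) ((k:ℝ) * b)]; ring
  · -- complex remainder bound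
    intro K i j
    have he := congrArg (fun M => M i j) (hexpC K)
    simp only [Matrix.add_apply] at he
    have : Rcs i j - (∑ l ∈ Finset.range K, (ζ τ - ζ s) ^ l • Rcτ ^ (l + 1)) i j
        = ((ζ τ - ζ s) ^ K • (Rcτ ^ K * Rcs)) i j := by rw [he]; ring
    rw [this, Matrix.smul_apply, smul_eq_mul, norm_mul, norm_pow, hdcn]
    have h2 := bnd_pow_mul hRcτn hbcs hb0 hbcs0 K i j
    calc (τ-s) ^ K * ‖(Rcτ ^ K * Rcs) i j‖ ≤ (τ-s) ^ K * ((k * b) ^ K * bcs) := by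
          apply mul_le_mul_of_nonneg_left h2 (by positivity)
      _ = ((τ-s) * (k * b)) ^ K * bcs := by rw [mul_pow (τ-s) ((k:ℝ) * b)]; ring
  · -- termwise domination
    intro K i j
    show ‖(∑ l ∈ Finset.range K, (ζ τ - ζ s) ^ l • Rcτ ^ (l + 1)) i j‖ ≤
      (∑ l ∈ Finset.range K, (τ - s) ^ l • Rτ ^ (l + 1)) i j
    rw [Matrix.sum_apply, Matrix.sum_apply]
    refine le_trans (norm_sum_le _ _) (Finset.sum_le_sum fun l _ => ?_)
    rw [Matrix.smul_apply, smul_eq_mul, norm_mul, norm_pow, hdcn,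
      Matrix.smul_apply, smul_eq_mul]
    exact mul_le_mul_of_nonneg_left (dom_pow hGτ (l+1) i j) (by positivity)

lemma good_base {k : ℕ} {C : Matrix (Fin k) (Fin k) ℝ} {Cc : Matrix (Fin k) (Fin k) ℂ}
    {ρ : ℝ} (hρ : 0 < ρ) {ζ : ℝ → ℂ} (hζn : ∀ t : ℝ, 0 < t → ‖ζ t‖ = t)
    (hCcE : ∀ i j, ‖Cc i j‖ ≤ C i j)
    (hdR : ∀ {t : ℝ}, ρ < t → IsUnit (t • (1:Matrix (Fin k) (Fin k) ℝ) - C).det)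
    (hdC : ∀ {t : ℝ}, ρ < t → IsUnit ((ζ t) • (1:Matrix (Fin k) (Fin k) ℂ) - Cc).det)
    {t cb : ℝ} (ht : ρ < t) (hcb : ∀ i j, ‖C i j‖ ≤ cb) (hcb0 : 0 ≤ cb)
    (htc : k * cb < t) :
    ∀ i j, ‖((ζ t • (1:Matrix (Fin k) (Fin k) ℂ) - Cc)⁻¹) i j‖ ≤
      ((t • (1:Matrix (Fin k) (Fin k) ℝ) - C)⁻¹) i j := by
  have ht0 : 0 < t := lt_trans hρ ht
  have hζt : ‖ζ t‖ = t := hζn t ht0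
  have hζt0 : ζ t ≠ 0 := fun h => by rw [h, norm_zero] at hζt; exact ne_of_gt ht0 hζt.symm
  set Rt := (t • (1:Matrix (Fin k) (Fin k) ℝ) - C)⁻¹ with hRt
  set Rct := (ζ t • (1:Matrix (Fin k) (Fin k) ℂ) - Cc)⁻¹ with hRct
  have hmulR : (t • (1:Matrix (Fin k) (Fin k) ℝ) - C) * Rt = 1 := Matrix.mul_nonsing_inv _ (hdR ht)
  have hmulC : (ζ t • (1:Matrix (Fin k) (Fin k) ℂ) - Cc) * Rct = 1 :=
    Matrix.mul_nonsing_inv _ (hdC ht)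
  -- Neumann-shape identities
  have hidR : Rt = t⁻¹ • (1:Matrix (Fin k) (Fin k) ℝ) + t⁻¹ • (C * Rt) := by
    have h1 : t • Rt - C * Rt = 1 := by
      rw [← hmulR, Matrix.sub_mul, Matrix.smul_mul, Matrix.one_mul]
    have h2 : t • Rt = 1 + C * Rt := by rw [← h1]; abel
    calc Rt = t⁻¹ • (t • Rt) := by rw [smul_smul, inv_mul_cancel₀ (ne_of_gt ht0), one_smul]
      _ = t⁻¹ • (1:Matrix (Fin k) (Fin k) ℝ) + t⁻¹ • (C * Rt) := by rw [h2, smul_add]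
  have hidC : Rct = (ζ t)⁻¹ • (1:Matrix (Fin k) (Fin k) ℂ) + (ζ t)⁻¹ • (Cc * Rct) := by
    have h1 : ζ t • Rct - Cc * Rct = 1 := by
      rw [← hmulC, Matrix.sub_mul, Matrix.smul_mul, Matrix.one_mul]
    have h2 : ζ t • Rct = 1 + Cc * Rct := by rw [← h1]; abel
    calc Rct = (ζ t)⁻¹ • (ζ t • Rct) := by
          rw [smul_smul, inv_mul_cancel₀ hζt0, one_smul]
      _ = (ζ t)⁻¹ • (1:Matrix (Fin k) (Fin k) ℂ) + (ζ t)⁻¹ • (Cc * Rct) := by rw [h2, smul_add]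
  have hexpR := expand_base C Rt t⁻¹ hidR
  have hexpC := expand_base Cc Rct (ζ t)⁻¹ hidC
  obtain ⟨bs, hbs0, hbs⟩ := exists_entry_bound (𝕜 := ℝ) Rt
  obtain ⟨bcs, hbcs0, hbcs⟩ := exists_entry_bound (𝕜 := ℂ) Rct
  have hC0 : ∀ i j, 0 ≤ C i j := fun i j => le_trans (norm_nonneg _) (hCcE i j)
  have hinv : ‖(ζ t)⁻¹‖ = t⁻¹ := by rw [norm_inv, hζt]
  have htinv0 : (0:ℝ) < t⁻¹ := inv_pos.mpr ht0
  have hq0 : 0 ≤ t⁻¹ * (k * cb) := by positivity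
  have hq1 : t⁻¹ * (k * cb) < 1 := by
    rw [inv_mul_lt_iff₀ ht0, mul_one]; exact htc
  refine conv_dominate (q := t⁻¹ * (k * cb)) (bs := bs) (bcs := bcs)
    (S := fun K => ∑ l ∈ Finset.range K, (t⁻¹) ^ (l + 1) • C ^ l)
    (Sc := fun K => ∑ l ∈ Finset.range K, ((ζ t)⁻¹) ^ (l + 1) • Cc ^ l)
    hq0 hq1 ?_ ?_ ?_
  · intro K i j
    have he := congrArg (fun M => M i j) (hexpR K)
    simp only [Matrix.add_apply] at he
    have heq : Rt i j - (∑ l ∈ Finset.range K, (t⁻¹) ^ (l + 1) • C ^ l) i j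
        = ((t⁻¹) ^ K • (C ^ K * Rt)) i j := by rw [he]; ring
    show |Rt i j - (∑ l ∈ Finset.range K, (t⁻¹) ^ (l + 1) • C ^ l) i j| ≤ _
    rw [heq, Matrix.smul_apply, smul_eq_mul, abs_mul, abs_pow, abs_of_pos htinv0]
    have h2 := bnd_pow_mul hcb hbs hcb0 hbs0 K i j
    rw [Real.norm_eq_abs] at h2
    calc (t⁻¹) ^ K * |(C ^ K * Rt) i j| ≤ (t⁻¹) ^ K * ((k * cb) ^ K * bs) :=
          mul_le_mul_of_nonneg_left h2 (by positivity)
      _ = (t⁻¹ * (k * cb)) ^ K * bs := by rw [mul_pow t⁻¹ ((k:ℝ) * cb)]; ring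
  · intro K i j
    have he := congrArg (fun M => M i j) (hexpC K)
    simp only [Matrix.add_apply] at he
    have hCcn : ∀ i j, ‖Cc i j‖ ≤ cb := fun i j => le_trans (hCcE i j) (by
      have := hcb i j; rwa [Real.norm_eq_abs, abs_of_nonneg (hC0 i j)] at this)
    have heq : Rct i j - (∑ l ∈ Finset.range K, ((ζ t)⁻¹) ^ (l + 1) • Cc ^ l) i j
        = (((ζ t)⁻¹) ^ K • (Cc ^ K * Rct)) i j := by rw [he]; ring
    show ‖Rct i j - (∑ l ∈ Finset.range K, ((ζ t)⁻¹) ^ (l + 1) • Cc ^ l) i j‖ ≤ _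
    rw [heq, Matrix.smul_apply, smul_eq_mul, norm_mul, norm_pow, hinv]
    have h2 := bnd_pow_mul hCcn hbcs hcb0 hbcs0 K i j
    calc (t⁻¹) ^ K * ‖(Cc ^ K * Rct) i j‖ ≤ (t⁻¹) ^ K * ((k * cb) ^ K * bcs) :=
          mul_le_mul_of_nonneg_left h2 (by positivity)
      _ = (t⁻¹ * (k * cb)) ^ K * bcs := by rw [mul_pow t⁻¹ ((k:ℝ) * cb)]; ring
  · intro K i j
    show ‖(∑ l ∈ Finset.range K, ((ζ t)⁻¹) ^ (l + 1) • Cc ^ l) i j‖ ≤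
      (∑ l ∈ Finset.range K, (t⁻¹) ^ (l + 1) • C ^ l) i j
    rw [Matrix.sum_apply, Matrix.sum_apply]
    refine le_trans (norm_sum_le _ _) (Finset.sum_le_sum fun l _ => ?_)
    rw [Matrix.smul_apply, smul_eq_mul, norm_mul, norm_pow, hinv,
      Matrix.smul_apply, smul_eq_mul]
    exact mul_le_mul_of_nonneg_left (dom_pow hCcE l i j) (by positivity)

lemma perron {k : ℕ} {C : Matrix (Fin k) (Fin k) ℝ} {ρ : ℝ} (hρ : 0 < ρ)
    (hC : ∀ i j, 0 ≤ C i j)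
    (hub : ∀ μ : ℂ, IsEigen C μ → ‖μ‖ ≤ ρ)
    (hat : ∃ μ : ℂ, IsEigen C μ ∧ ‖μ‖ = ρ) :
    ∃ y : Fin k → ℝ, (∀ i, 0 ≤ y i) ∧ y ≠ 0 ∧ C.mulVec y = ρ • y := by
  classical
  obtain ⟨μ, hμe, hμa⟩ := hat
  obtain ⟨z, hz0, hzeq⟩ := (isEigen_iff C μ).mp hμe
  obtain ⟨i0, hzi0⟩ := Function.ne_iff.mp hz0
  set Cc := C.map (algebraMap ℝ ℂ) with hCcdef
  set ζ : ℝ → ℂ := fun t => (((t / ρ : ℝ) : ℂ) * μ) with hζdef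
  -- basic facts about ζ
  have hζsub : ∀ t s : ℝ, ζ t - ζ s = (((t - s) / ρ : ℝ) : ℂ) * μ := by
    intro t s
    simp only [hζdef]
    rw [← sub_mul]
    congr 1
    push_cast
    ring
  have hζd : ∀ t s : ℝ, ‖ζ t - ζ s‖ = |t - s| := by
    intro t s
    rw [hζsub, norm_mul, Complex.norm_real, Real.norm_eq_abs, abs_div,
      abs_of_pos hρ, hμa, div_mul_cancel₀ _ (ne_of_gt hρ)]
  have hζn : ∀ t : ℝ, 0 < t → ‖ζ t‖ = t := by
    intro t ht
    have := hζd t 0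
    simp only [hζdef] at this ⊢
    rw [show ((0:ℝ)/ρ : ℝ) = (0:ℝ) by ring, Complex.ofReal_zero, zero_mul, sub_zero] at this
    rw [this, sub_zero, abs_of_pos ht]
  have hζρ : ζ ρ = μ := by
    simp only [hζdef, div_self (ne_of_gt hρ), Complex.ofReal_one, one_mul]
  have hζabs : ∀ t : ℝ, ρ < t → ρ < ‖ζ t‖ := by
    intro t ht
    rw [hζn t (hρ.trans ht)]
    exact ht
  have hdR : ∀ {t : ℝ}, ρ < t → IsUnit (t • (1:Matrix (Fin k) (Fin k) ℝ) - C).det :=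
    fun ht => det_unit_real hub ht
  have hdC : ∀ {t : ℝ}, ρ < t → IsUnit ((ζ t) • (1:Matrix (Fin k) (Fin k) ℂ) - Cc).det :=
    fun ht => det_unit_complex hub (hζabs _ ht)
  have hCcE : ∀ i j, ‖Cc i j‖ ≤ C i j := by
    intro i j
    have hCij : Cc i j = ((C i j : ℝ) : ℂ) := rfl
    rw [hCij, Complex.norm_real, Real.norm_eq_abs, abs_of_nonneg (hC i j)]
  have hzi0' : z i0 ≠ 0 := by simpa using hzi0
  haveI : Nonempty (Fin k) := ⟨i0⟩
  -- globalization
  obtain ⟨cb, hcb0, hcb⟩ := exists_entry_bound (𝕜 := ℝ) C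
  set I : Set ℝ := {t : ℝ | ρ < t ∧ ∀ s, t ≤ s → ∀ i j,
    ‖((ζ s • (1:Matrix (Fin k) (Fin k) ℂ) - Cc)⁻¹) i j‖ ≤
      ((s • (1:Matrix (Fin k) (Fin k) ℝ) - C)⁻¹) i j} with hIdef
  have hmemI : max (ρ + 1) (k * cb + 1) ∈ I := by
    constructor
    · exact lt_of_lt_of_le (by linarith) (le_max_left _ _)
    · intro s hs
      have h1 : ρ < s := lt_of_lt_of_le (by linarith) (le_trans (le_max_left _ _) hs)
      have h2 : (k:ℝ) * cb < s :=
        lt_of_lt_of_le (by linarith [le_max_right (ρ+1) ((k:ℝ)*cb+1)])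
          (le_trans (le_max_right _ _) hs)
      exact good_base hρ hζn hCcE hdR hdC h1 hcb hcb0 h2
  have hIne : I.Nonempty := ⟨_, hmemI⟩
  have hIbdd : BddBelow I := ⟨ρ, fun t ht => ht.1.le⟩
  set τ0 := sInf I with hτ0def
  have hτ0ρ : ρ ≤ τ0 := le_csInf hIne fun t ht => ht.1.le
  have hGs : ∀ s, τ0 < s → ∀ i j,
      ‖((ζ s • (1:Matrix (Fin k) (Fin k) ℂ) - Cc)⁻¹) i j‖ ≤
        ((s • (1:Matrix (Fin k) (Fin k) ℝ) - C)⁻¹) i j := by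
    intro s hs
    obtain ⟨t1, ht1I, ht1s⟩ := exists_lt_of_csInf_lt hIne hs
    exact ht1I.2 s ht1s.le
  have hτ0eq : τ0 = ρ := by
    by_contra hne'
    have hτρ : ρ < τ0 := lt_of_le_of_ne hτ0ρ (Ne.symm hne')
    obtain ⟨β, hβ0, hβ⟩ :=
      exists_entry_bound (𝕜 := ℝ) ((τ0 • (1:Matrix (Fin k) (Fin k) ℝ) - C)⁻¹)
    have hkβ0 : (0:ℝ) ≤ (k:ℝ)*β := by positivity
    set δ : ℝ := 1/(2*((k:ℝ)*β+1)) with hδdef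
    have hδ0 : 0 < δ := by positivity
    have hδhalf : δ * ((k:ℝ)*β) ≤ 1/2 := by
      rw [hδdef, div_mul_eq_mul_div, one_mul, div_le_div_iff₀ (by positivity) (by norm_num)]
      nlinarith
    have hloc : ∀ t, τ0 < t → t < τ0 + δ → ∀ i j,
        ((t • (1:Matrix (Fin k) (Fin k) ℝ) - C)⁻¹) i j ≤ 2*β := by
      intro t htl htu
      have hid := resolvent_id C t τ0 (hdR (hτρ.trans htl)) (hdR hτρ)
      set Rt := (t • (1:Matrix (Fin k) (Fin k) ℝ) - C)⁻¹ with hRtdef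
      set Rτ := (τ0 • (1:Matrix (Fin k) (Fin k) ℝ) - C)⁻¹ with hRτdef
      set nm := Finset.univ.sup' Finset.univ_nonempty
        (fun p : Fin k × Fin k => |Rt p.1 p.2|) with hnmdef
      have hnmle : ∀ i j, |Rt i j| ≤ nm := fun i j =>
        Finset.le_sup' (f := fun p : Fin k × Fin k => |Rt p.1 p.2|) (Finset.mem_univ (i,j))
      have hnm0 : 0 ≤ nm := le_trans (abs_nonneg _) (hnmle i0 i0)
      have hβ' : ∀ i j, |Rτ i j| ≤ β := fun i j => by
        have := hβ i j; rwa [Real.norm_eq_abs] at this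
      have hstep1 : ∀ i j, |Rt i j| ≤ β + (t - τ0) * ((k:ℝ) * β * nm) := by
        intro i j
        have he := congrArg (fun M => M i j) hid
        simp only [Matrix.add_apply, Matrix.smul_apply, smul_eq_mul] at he
        rw [he]
        refine le_trans (abs_add_le _ _) (add_le_add (hβ' i j) ?_)
        rw [abs_mul, abs_sub_comm τ0 t, abs_of_pos (by linarith : (0:ℝ) < t - τ0)]
        refine mul_le_mul_of_nonneg_left ?_ (by linarith)
        have : |(Rτ * Rt) i j| ≤ ∑ l : Fin k, |Rτ i l| * |Rt l j| := by
          rw [Matrix.mul_apply]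
          refine le_trans (Finset.abs_sum_le_sum_abs _ _) (Finset.sum_le_sum fun l _ => ?_)
          rw [abs_mul]
        refine le_trans this (le_trans (Finset.sum_le_sum fun l _ =>
          mul_le_mul (hβ' i l) (hnmle l j) (abs_nonneg _) hβ0) ?_)
        rw [Finset.sum_const, Finset.card_univ, Fintype.card_fin, nsmul_eq_mul]
        rw [mul_assoc]
      have hnmself : nm ≤ β + (t - τ0) * ((k:ℝ) * β * nm) := by
        rw [hnmdef]
        refine Finset.sup'_le _ _ fun p _ => ?_
        exact hstep1 p.1 p.2
      have htτδ : t - τ0 ≤ δ := by linarith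
      have hprod : (t - τ0) * ((k:ℝ) * β * nm) ≤ (1/2) * nm := by
        have h1 : (t - τ0) * ((k:ℝ) * β) ≤ δ * ((k:ℝ)*β) :=
          mul_le_mul_of_nonneg_right htτδ hkβ0
        have h2 : (t - τ0) * ((k:ℝ) * β) ≤ 1/2 := le_trans h1 hδhalf
        calc (t - τ0) * ((k:ℝ) * β * nm) = ((t - τ0) * ((k:ℝ) * β)) * nm := by ring
          _ ≤ (1/2) * nm := mul_le_mul_of_nonneg_right h2 hnm0
      have hnm2β : nm ≤ 2*β := by linarith
      intro i j
      exact le_trans (le_abs_self _) (le_trans (hnmle i j) hnm2β)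
    set ε : ℝ := 1/(2*((k:ℝ)*(2*β)+1)) with hεdef
    have hε0 : 0 < ε := by positivity
    have hεhalf : ε * ((k:ℝ)*(2*β)) ≤ 1/2 := by
      rw [hεdef, div_mul_eq_mul_div, one_mul, div_le_div_iff₀ (by positivity) (by norm_num)]
      nlinarith
    set γ : ℝ := (min δ ε)/4 with hγdef
    have hγ0 : 0 < γ := by
      rw [hγdef]
      have := lt_min hδ0 hε0
      positivity
    set t1 : ℝ := τ0 + γ with ht1def
    have ht1τ : τ0 < t1 := by rw [ht1def]; linarith
    have ht1δ : t1 < τ0 + δ := by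
      have h1 : γ < δ := by
        rw [hγdef]; have := min_le_left δ ε; linarith
      rw [ht1def]; linarith
    have hGt1 := hGs t1 ht1τ
    have hb1 : ∀ i j, ((t1 • (1:Matrix (Fin k) (Fin k) ℝ) - C)⁻¹) i j ≤ 2*β :=
      hloc t1 ht1τ ht1δ
    set s2 : ℝ := max ((ρ + τ0)/2) (t1 - ε/2) with hs2def
    have hs2ρ : ρ < s2 := lt_of_lt_of_le (by linarith) (le_max_left _ _)
    have hγε : γ ≤ ε/4 := by
      rw [hγdef]; have := min_le_right δ ε; linarith
    have hs2τ : s2 < τ0 := by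
      rw [hs2def]
      apply max_lt
      · linarith
      · rw [ht1def]; linarith
    have hs2I : s2 ∈ I := by
      refine ⟨hs2ρ, fun s hs => ?_⟩
      rcases lt_or_ge s t1 with hst | hst
      · have hρs : ρ < s := lt_of_lt_of_le hs2ρ hs
        have ht1s : t1 - s ≤ ε/2 := by
          have h1 : t1 - ε/2 ≤ s2 := le_max_right _ _
          linarith
        have hsmall : (t1 - s) * ((k:ℝ) * (2*β)) < 1 := by
          have h2 : (0:ℝ) ≤ (k:ℝ) * (2*β) := by positivity
          have h3 : (t1 - s) * ((k:ℝ) * (2*β)) ≤ (ε/2) * ((k:ℝ)*(2*β)) :=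
            mul_le_mul_of_nonneg_right ht1s h2
          have h4 : (ε/2) * ((k:ℝ)*(2*β)) ≤ 1/4 := by
            calc (ε/2) * ((k:ℝ)*(2*β)) = (ε * ((k:ℝ)*(2*β)))/2 := by ring
              _ ≤ (1/2)/2 := by linarith
              _ = 1/4 := by norm_num
          exact lt_of_le_of_lt (le_trans h3 h4) (by norm_num)
        exact good_step hζd hdR hdC hρs hst (by positivity) hGt1 hb1 hsmall
      · exact hGs s (lt_of_lt_of_le ht1τ hst)
    exact absurd (csInf_le hIbdd hs2I) (not_le.mpr hs2τ)
  have hGall : ∀ t, ρ < t → ∀ i j,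
      ‖((ζ t • (1:Matrix (Fin k) (Fin k) ℂ) - Cc)⁻¹) i j‖ ≤
        ((t • (1:Matrix (Fin k) (Fin k) ℝ) - C)⁻¹) i j :=
    fun t ht => hGs t (by rw [hτ0eq]; exact ht)
  -- key lower bound on resolvent applied to |z|
  set c : Fin k → ℝ := fun j => ‖z j‖ with hcdef
  have hc0 : ∀ j, 0 ≤ c j := fun j => norm_nonneg _
  have hci0 : 0 < c i0 := norm_pos_iff.mpr hzi0'
  have hkey : ∀ t : ℝ, ρ < t → ∀ i,
      c i ≤ (t - ρ) * (((t • (1:Matrix (Fin k) (Fin k) ℝ) - C)⁻¹).mulVec c) i := by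
    intro t ht i
    have hGt := hGall t ht
    have h1 : (ζ t • (1:Matrix (Fin k) (Fin k) ℂ) - Cc).mulVec z = (ζ t - μ) • z := by
      rw [Matrix.sub_mulVec, Matrix.smul_mulVec, Matrix.one_mulVec, hzeq, ← sub_smul]
    have h2 : (ζ t - μ) • (((ζ t • (1:Matrix (Fin k) (Fin k) ℂ) - Cc)⁻¹).mulVec z) = z := by
      have h3 : ((ζ t • (1:Matrix (Fin k) (Fin k) ℂ) - Cc)⁻¹).mulVec
          ((ζ t • (1:Matrix (Fin k) (Fin k) ℂ) - Cc).mulVec z) = z := by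
        rw [Matrix.mulVec_mulVec, Matrix.nonsing_inv_mul _ (hdC ht), Matrix.one_mulVec]
      rw [h1, Matrix.mulVec_smul] at h3
      exact h3
    have hnrm : ‖ζ t - μ‖ = t - ρ := by
      rw [← hζρ, hζd, abs_of_pos (by linarith : (0:ℝ) < t - ρ)]
    have hzi : c i = (t - ρ) * ‖(((ζ t • (1:Matrix (Fin k) (Fin k) ℂ) - Cc)⁻¹).mulVec z) i‖ := by
      have h4 := congrFun h2 i
      rw [Pi.smul_apply, smul_eq_mul] at h4
      rw [hcdef]
      calc ‖z i‖ = ‖(ζ t - μ) * (((ζ t • (1:Matrix (Fin k) (Fin k) ℂ) - Cc)⁻¹).mulVec z) i‖ := by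
            rw [h4]
        _ = (t - ρ) * ‖(((ζ t • (1:Matrix (Fin k) (Fin k) ℂ) - Cc)⁻¹).mulVec z) i‖ := by
            rw [norm_mul, hnrm]
    rw [hzi]
    refine mul_le_mul_of_nonneg_left ?_ (by linarith : (0:ℝ) ≤ t - ρ)
    show ‖∑ l, ((ζ t • (1:Matrix (Fin k) (Fin k) ℂ) - Cc)⁻¹) i l * z l‖ ≤
      ∑ l, ((t • (1:Matrix (Fin k) (Fin k) ℝ) - C)⁻¹) i l * c l
    refine le_trans (norm_sum_le _ _) (Finset.sum_le_sum fun l _ => ?_)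
    rw [norm_mul]
    exact mul_le_mul (hGt i l) le_rfl (norm_nonneg _) (le_trans (norm_nonneg _) (hGt i l))
  -- the approximating sequence
  set T : ℕ → ℝ := fun K => ρ + 1/(K+1) with hTdef
  have hT : ∀ K : ℕ, ρ < T K := by
    intro K
    have : (0:ℝ) < 1/(K+1) := by positivity
    rw [hTdef]
    linarith
  have hTsub : ∀ K : ℕ, T K - ρ = 1/((K:ℝ)+1) := by intro K; rw [hTdef]; ring
  set y : ℕ → Fin k → ℝ :=
    fun K => (((T K) • (1:Matrix (Fin k) (Fin k) ℝ) - C)⁻¹).mulVec c with hydef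
  have hy0 : ∀ K i, 0 ≤ y K i := by
    intro K i
    rw [hydef]
    show (0:ℝ) ≤ ∑ l, ((T K • (1:Matrix (Fin k) (Fin k) ℝ) - C)⁻¹) i l * c l
    refine Finset.sum_nonneg fun l _ => mul_nonneg ?_ (hc0 l)
    exact le_trans (norm_nonneg _) (hGall (T K) (hT K) i l)
  have hylb : ∀ K : ℕ, ((K:ℝ)+1) * c i0 ≤ y K i0 := by
    intro K
    have := hkey (T K) (hT K) i0
    rw [hTsub] at this
    rw [div_mul_eq_mul_div, one_mul, le_div_iff₀ (by positivity : (0:ℝ) < (K:ℝ)+1)] at this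
    linarith [this]
  set S : ℕ → ℝ := fun K => ∑ i, y K i with hSdef
  have hSy : ∀ K i, y K i ≤ S K := by
    intro K i
    exact Finset.single_le_sum (f := fun i => y K i) (fun i _ => hy0 K i) (Finset.mem_univ i)
  have hSlb : ∀ K : ℕ, ((K:ℝ)+1) * c i0 ≤ S K := fun K => le_trans (hylb K) (hSy K i0)
  have hS0 : ∀ K, 0 < S K := fun K =>
    lt_of_lt_of_le (by positivity : (0:ℝ) < ((K:ℝ)+1) * c i0) (hSlb K)
  set u : ℕ → Fin k → ℝ := fun K => (S K)⁻¹ • y K with hudef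
  have hmemicc : ∀ K, u K ∈ Set.pi Set.univ (fun _ : Fin k => Set.Icc (0:ℝ) 1) := by
    intro K i _
    constructor
    · exact mul_nonneg (inv_nonneg.mpr (hS0 K).le) (hy0 K i)
    · show (S K)⁻¹ * y K i ≤ 1
      rw [← inv_mul_cancel₀ (ne_of_gt (hS0 K))]
      exact mul_le_mul_of_nonneg_left (hSy K i) (inv_nonneg.mpr (hS0 K).le)
  have hsum1 : ∀ K, ∑ i, u K i = 1 := by
    intro K
    show ∑ i, (S K)⁻¹ * y K i = 1
    rw [← Finset.mul_sum]
    exact inv_mul_cancel₀ (ne_of_gt (hS0 K))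
  have hcpt : IsCompact (Set.pi Set.univ fun _ : Fin k => Set.Icc (0:ℝ) 1) :=
    isCompact_univ_pi fun _ => isCompact_Icc
  obtain ⟨u0, hu0mem, φ, hφmono, hφlim⟩ := hcpt.tendsto_subseq hmemicc
  have hco : ∀ i, Filter.Tendsto (fun K => u (φ K) i) atTop (nhds (u0 i)) :=
    fun i => tendsto_pi_nhds.mp hφlim i
  have hφatTop : Filter.Tendsto φ atTop atTop := hφmono.tendsto_atTop
  have hTlim : Filter.Tendsto (fun K => T (φ K)) atTop (nhds ρ) := by
    have h1 : Filter.Tendsto (fun K : ℕ => 1/((K:ℝ)+1)) atTop (nhds 0) :=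
      tendsto_one_div_add_atTop_nhds_zero_nat
    have h2 : Filter.Tendsto (fun K : ℕ => T K) atTop (nhds (ρ + 0)) :=
      Filter.Tendsto.const_add ρ h1
    rw [add_zero] at h2
    exact h2.comp hφatTop
  have hSinv : Filter.Tendsto (fun K => (S K)⁻¹) atTop (nhds 0) := by
    refine squeeze_zero (g := fun K : ℕ => (c i0)⁻¹ * (1/((K:ℝ)+1)))
      (fun K => inv_nonneg.mpr (hS0 K).le) (fun K => ?_) ?_
    · show (S K)⁻¹ ≤ (c i0)⁻¹ * (1/((K:ℝ)+1))
      rw [one_div, ← mul_inv]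
      refine inv_anti₀ (by positivity) ?_
      calc c i0 * ((K:ℝ)+1) = ((K:ℝ)+1) * c i0 := by ring
        _ ≤ S K := hSlb K
    · have h1 : Filter.Tendsto (fun K : ℕ => 1/((K:ℝ)+1)) atTop (nhds 0) :=
        tendsto_one_div_add_atTop_nhds_zero_nat
      have := h1.const_mul ((c i0)⁻¹)
      rwa [mul_zero] at this
  have hSinvφ : Filter.Tendsto (fun K => (S (φ K))⁻¹) atTop (nhds 0) := hSinv.comp hφatTop
  have heqK : ∀ K, (T K) • (u K) - C.mulVec (u K) = (S K)⁻¹ • c := by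
    intro K
    have h1 : ((T K) • (1:Matrix (Fin k) (Fin k) ℝ) - C) *
        ((T K) • (1:Matrix (Fin k) (Fin k) ℝ) - C)⁻¹ = 1 :=
      Matrix.mul_nonsing_inv _ (hdR (hT K))
    have h2 : ((T K) • (1:Matrix (Fin k) (Fin k) ℝ) - C).mulVec (y K) = c := by
      rw [hydef, Matrix.mulVec_mulVec, h1, Matrix.one_mulVec]
    have h3 : (T K) • (y K) - C.mulVec (y K) = c := by
      rw [← h2, Matrix.sub_mulVec, Matrix.smul_mulVec, Matrix.one_mulVec]
    rw [hudef]
    show (T K) • ((S K)⁻¹ • y K) - C.mulVec ((S K)⁻¹ • y K) = (S K)⁻¹ • c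
    rw [Matrix.mulVec_smul, smul_comm (T K) ((S K)⁻¹), ← smul_sub, h3]
  have hfinal : ∀ i, ρ * u0 i - ∑ j, C i j * u0 j = 0 := by
    intro i
    have hlhs : Filter.Tendsto (fun K => T (φ K) * u (φ K) i - ∑ j, C i j * u (φ K) j)
        atTop (nhds (ρ * u0 i - ∑ j, C i j * u0 j)) := by
      refine Filter.Tendsto.sub (hTlim.mul (hco i)) ?_
      exact tendsto_finset_sum _ fun j _ => (hco j).const_mul _
    have hrhs : Filter.Tendsto (fun K => (S (φ K))⁻¹ * c i) atTop (nhds 0) := by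
      have := hSinvφ.mul_const (c i)
      rwa [zero_mul] at this
    have hfeq : (fun K => T (φ K) * u (φ K) i - ∑ j, C i j * u (φ K) j)
        = fun K => (S (φ K))⁻¹ * c i := by
      funext K
      have := congrFun (heqK (φ K)) i
      rw [Pi.sub_apply, Pi.smul_apply, Pi.smul_apply, smul_eq_mul, smul_eq_mul] at this
      rw [← this]
      congr 1
    rw [hfeq] at hlhs
    exact tendsto_nhds_unique hlhs hrhs
  have hsum0 : ∑ i, u0 i = 1 := by
    have h1 : Filter.Tendsto (fun K => ∑ i, u (φ K) i) atTop (nhds (∑ i, u0 i)) :=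
      tendsto_finset_sum _ fun i _ => hco i
    have h2 : (fun K => ∑ i, u (φ K) i) = fun _ => (1:ℝ) := by
      funext K; exact hsum1 (φ K)
    rw [h2] at h1
    exact tendsto_nhds_unique h1 tendsto_const_nhds
  refine ⟨u0, fun i => (hu0mem i (Set.mem_univ i)).1, ?_, ?_⟩
  · intro h0
    rw [h0] at hsum0
    simp at hsum0
  · funext i
    have := hfinal i
    rw [Pi.smul_apply, smul_eq_mul]
    show ∑ j, C i j * u0 j = ρ * u0 i
    linarith

lemma mulVec_ext {a b : ℕ} {M N : Matrix (Fin a) (Fin b) ℝ}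
    (h : ∀ v, M.mulVec v = N.mulVec v) : M = N := by
  ext i j
  have := congrFun (h (Pi.single j 1)) i
  rw [Matrix.mulVec_single, Matrix.mulVec_single] at this
  simpa using this

-- symmetric idempotents with equal kernels coincide

lemma proj_eq {n : ℕ} {P Q : Matrix (Fin n) (Fin n) ℝ} (hPs : Pᵀ = P) (hQs : Qᵀ = Q)
    (hPi : P * P = P) (hQi : Q * Q = Q)
    (hker : ∀ v, P.mulVec v = 0 ↔ Q.mulVec v = 0) : P = Q := by
  have hQP : Q * P = Q := by
    apply mulVec_ext
    intro v
    have h1 : P.mulVec (P.mulVec v - v) = 0 := by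
      rw [Matrix.mulVec_sub, Matrix.mulVec_mulVec, hPi, sub_self]
    have h2 : Q.mulVec (P.mulVec v - v) = 0 := (hker _).mp h1
    rw [Matrix.mulVec_sub, sub_eq_zero] at h2
    rw [← Matrix.mulVec_mulVec, h2]
  have hPQ : P * Q = P := by
    apply mulVec_ext
    intro v
    have h1 : Q.mulVec (Q.mulVec v - v) = 0 := by
      rw [Matrix.mulVec_sub, Matrix.mulVec_mulVec, hQi, sub_self]
    have h2 : P.mulVec (Q.mulVec v - v) = 0 := (hker _).mpr h1
    rw [Matrix.mulVec_sub, sub_eq_zero] at h2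
    rw [← Matrix.mulVec_mulVec, h2]
  calc P = (P * Q)ᵀ := by rw [hPQ, hPs]
    _ = Qᵀ * Pᵀ := Matrix.transpose_mul _ _
    _ = Q * P := by rw [hPs, hQs]
    _ = Q := hQP

end aux

open Finset Filter in
theorem stmt5 {m n : ℕ} (A U V : Matrix (Fin m) (Fin n) ℝ)
    (Ad : Matrix (Fin n) (Fin m) ℝ) (Ud : Matrix (Fin n) (Fin m) ℝ)
    (hps : ProperSplitting A U V) (hA : IsMP A Ad) (hU : IsMP U Ud)
    (hsemi : EntryNonneg Ad) (hUd : EntryNonneg Ud) (hVUd : EntryNonneg (V * Ud))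
    (hrho : 0 < specRad (Ud * V)) :
    ∃ x : Fin n → ℝ, (∀ i, 0 ≤ x i) ∧ x ≠ 0 ∧
      (Ud * V).mulVec x = specRad (Ud * V) • x ∧
      (∀ i, 0 ≤ A.mulVec x i) ∧ A.mulVec x ≠ 0 ∧
      (∀ i, 0 ≤ V.mulVec x i) ∧ V.mulVec x ≠ 0 := by
  obtain ⟨hAUV, hrange, hker⟩ := hps
  obtain ⟨hA1, hA2, hA3, hA4⟩ := hA
  obtain ⟨hU1, hU2, hU3, hU4⟩ := hU
  set ρ := specRad (Ud * V) with hρdef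
  set S := {r : ℝ | ∃ μ : ℂ, IsEigen (Ud * V) μ ∧ r = ‖μ‖} with hSdef
  have hρ0 : 0 < ρ := hrho
  have hspec : ρ = sSup S := rfl
  have hSfin : S.Finite := by
    have hpne : ((Ud * V).map (algebraMap ℝ ℂ)).charpoly ≠ 0 := (Matrix.charpoly_monic _).ne_zero
    have hroots : {μ : ℂ | IsEigen (Ud * V) μ}.Finite := Polynomial.finite_setOf_isRoot hpne
    refine Set.Finite.subset (hroots.image (fun μ : ℂ => ‖μ‖)) ?_
    rintro r ⟨μ, hμ, rfl⟩
    exact ⟨μ, hμ, rfl⟩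
  have hSne : S.Nonempty := by
    by_contra hcon
    rw [Set.not_nonempty_iff_eq_empty] at hcon
    rw [hspec, hcon, Real.sSup_empty] at hρ0
    exact lt_irrefl 0 hρ0
  have hmemS : ρ ∈ S := by rw [hspec]; exact hSne.csSup_mem hSfin
  have hub : ∀ r ∈ S, r ≤ ρ := fun r hr => by rw [hspec]; exact le_csSup hSfin.bddAbove hr
  have hubB : ∀ μ : ℂ, IsEigen (Ud * V) μ → ‖μ‖ ≤ ρ := fun μ hμ => hub _ ⟨μ, hμ, rfl⟩
  obtain ⟨μ0, hμ0e, hμ0a⟩ := hmemS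
  have hμ0ne : μ0 ≠ 0 := by
    intro h
    rw [h, norm_zero] at hμ0a
    exact lt_irrefl 0 (hμ0a ▸ hρ0)
  have hatC : IsEigen (V * Ud) μ0 := isEigen_transfer Ud V hμ0ne hμ0e
  have hubC : ∀ μ : ℂ, IsEigen (V * Ud) μ → ‖μ‖ ≤ ρ := by
    intro μ hμ
    rcases eq_or_ne μ 0 with h0 | h0
    · rw [h0, norm_zero]; exact hρ0.le
    · exact hubB μ (isEigen_transfer V Ud h0 hμ)
  obtain ⟨y, hy0, hyne, hyeq⟩ := perron hρ0 (fun i j => hVUd i j) hubC ⟨μ0, hatC, hμ0a.symm⟩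
  set x := Ud.mulVec y with hxdef
  have hyW : y ∈ LinearMap.range U.mulVecLin := by
    have hVU : V = U - A := by rw [hAUV, sub_sub_cancel]
    have h1 : (V * Ud).mulVec y = U.mulVec x - A.mulVec x := by
      rw [← Matrix.mulVec_mulVec, ← hxdef]
      rw [hVU, Matrix.sub_mulVec]
    have h2 : U.mulVec x ∈ LinearMap.range U.mulVecLin :=
      LinearMap.mem_range.mpr ⟨x, by rw [Matrix.mulVecLin_apply]⟩
    have h3 : A.mulVec x ∈ LinearMap.range U.mulVecLin := by
      rw [hrange]
      exact LinearMap.mem_range.mpr ⟨x, by rw [Matrix.mulVecLin_apply]⟩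
    have h4 : (V * Ud).mulVec y ∈ LinearMap.range U.mulVecLin := by
      rw [h1]; exact Submodule.sub_mem _ h2 h3
    have h5 : y = ρ⁻¹ • ((V * Ud).mulVec y) := by
      rw [hyeq, smul_smul, inv_mul_cancel₀ (ne_of_gt hρ0), one_smul]
    rw [h5]
    exact Submodule.smul_mem _ _ h4
  obtain ⟨w, hw⟩ := hyW
  have hwy : U.mulVec w = y := by rw [← Matrix.mulVecLin_apply, hw]
  have hUx : U.mulVec x = y := by
    rw [hxdef, Matrix.mulVec_mulVec, ← hwy, Matrix.mulVec_mulVec, hU1, hwy]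
  have hVx : V.mulVec x = ρ • y := by rw [hxdef, Matrix.mulVec_mulVec, hyeq]
  have hAx : A.mulVec x = (1-ρ) • y := by
    rw [hAUV, Matrix.sub_mulVec, hUx, hVx, sub_smul, one_smul]
  have hPQ : Ad * A = Ud * U := by
    apply proj_eq hA4 hU4
    · rw [← Matrix.mul_assoc, hA2]
    · rw [← Matrix.mul_assoc, hU2]
    · intro v
      have hAker : A.mulVec v = 0 ↔ U.mulVec v = 0 := by
        constructor
        · intro h
          have hv : v ∈ LinearMap.ker A.mulVecLin := by
            rw [LinearMap.mem_ker, Matrix.mulVecLin_apply]; exact h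
          rw [← hker] at hv
          rwa [LinearMap.mem_ker, Matrix.mulVecLin_apply] at hv
        · intro h
          have hv : v ∈ LinearMap.ker U.mulVecLin := by
            rw [LinearMap.mem_ker, Matrix.mulVecLin_apply]; exact h
          rw [hker] at hv
          rwa [LinearMap.mem_ker, Matrix.mulVecLin_apply] at hv
      constructor
      · intro h
        have hAv : A.mulVec v = 0 := by
          calc A.mulVec v = (A * (Ad * A)).mulVec v := by rw [← Matrix.mul_assoc, hA1]
            _ = A.mulVec ((Ad * A).mulVec v) := (Matrix.mulVec_mulVec _ _ _).symm
            _ = 0 := by rw [h, Matrix.mulVec_zero]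
        have hUv : U.mulVec v = 0 := hAker.mp hAv
        rw [← Matrix.mulVec_mulVec, hUv, Matrix.mulVec_zero]
      · intro h
        have hUv : U.mulVec v = 0 := by
          calc U.mulVec v = (U * (Ud * U)).mulVec v := by rw [← Matrix.mul_assoc, hU1]
            _ = U.mulVec ((Ud * U).mulVec v) := (Matrix.mulVec_mulVec _ _ _).symm
            _ = 0 := by rw [h, Matrix.mulVec_zero]
        have hAv : A.mulVec v = 0 := hAker.mpr hUv
        rw [← Matrix.mulVec_mulVec, hAv, Matrix.mulVec_zero]
  have hAdAx : (Ad * A).mulVec x = x := by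
    rw [hPQ, hxdef, Matrix.mulVec_mulVec, hU2]
  have hx0 : ∀ i, 0 ≤ x i := by
    intro i
    rw [hxdef]
    show 0 ≤ ∑ l, Ud i l * y l
    exact Finset.sum_nonneg fun l _ => mul_nonneg (hUd i l) (hy0 l)
  have hρyne : ρ • y ≠ 0 := smul_ne_zero (ne_of_gt hρ0) hyne
  have hxne : x ≠ 0 := by
    intro h
    rw [h, Matrix.mulVec_zero] at hVx
    exact hρyne hVx.symm
  have hAdy0 : ∀ i, 0 ≤ (Ad.mulVec y) i := by
    intro i
    show 0 ≤ ∑ l, Ad i l * y l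
    exact Finset.sum_nonneg fun l _ => mul_nonneg (hsemi i l) (hy0 l)
  have hxeq : x = (1-ρ) • (Ad.mulVec y) := by
    calc x = (Ad * A).mulVec x := hAdAx.symm
      _ = Ad.mulVec (A.mulVec x) := (Matrix.mulVec_mulVec _ _ _).symm
      _ = Ad.mulVec ((1-ρ) • y) := by rw [hAx]
      _ = (1-ρ) • Ad.mulVec y := Matrix.mulVec_smul _ _ _
  have hρ1 : ρ < 1 := by
    by_contra hcon
    push_neg at hcon
    apply hxne
    funext i
    have h1 := hx0 i
    have h2 : x i = (1-ρ) * (Ad.mulVec y) i := by rw [hxeq, Pi.smul_apply, smul_eq_mul]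
    have h3 : (1-ρ) * (Ad.mulVec y) i ≤ 0 :=
      mul_nonpos_iff.mpr (Or.inr ⟨by linarith, hAdy0 i⟩)
    show x i = 0
    linarith [h2 ▸ h3]
  refine ⟨x, hx0, hxne, ?_, ?_, ?_, ?_, ?_⟩
  · rw [hxdef, Matrix.mulVec_mulVec, Matrix.mul_assoc, ← Matrix.mulVec_mulVec, hyeq,
      Matrix.mulVec_smul]
  · intro i
    rw [hAx, Pi.smul_apply, smul_eq_mul]
    exact mul_nonneg (by linarith) (hy0 i)
  · rw [hAx]
    exact smul_ne_zero (by intro h; rw [sub_eq_zero] at h; linarith : (1:ℝ)-ρ ≠ 0) hyne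
  · intro i
    rw [hVx, Pi.smul_apply, smul_eq_mul]
    exact mul_nonneg hρ0.le (hy0 i)
  · rw [hVx]
    exact hρyne
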